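/- For 1 ≤ k < m and m ≤ t < n, the map sending τ = (τ_0,...,τ_{k-1}, τ_k, ..., τ_{m-1}, n) to τ' = (τ_0,...,τ_{k-1}, τ_k - 1, ..., τ_{m-1} - 1, n) is a bijection from {τ ∈ T(k,t) : τ_{k-1} ≠ b(k-1,t)} onto T(k, t-1). -/

import Mathlib

open Fin.NatCast

/-- Changepoint sequences: strictly increasing `τ_0 = 0 < τ_1 < ... < τ_m = n`. -/
def CP (n m : ℕ) : Set (Fin (m + 1) → ℕ) :=
  {τ | StrictMono τ ∧ τ 0 = 0 ∧ τ (Fin.last m) = n}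

/-- `T n m k t`: changepoint sequences with `τ (m-1) = t` whose entries at
indices `k, k+1, ..., m-1` are consecutive. -/
def T (n m k t : ℕ) : Set (Fin (m + 1) → ℕ) :=
  {τ | τ ∈ CP n m ∧ τ ((m - 1 : ℕ) : Fin (m + 1)) = t ∧
    ∀ i : ℕ, k ≤ i → i + 1 < m →
      τ ((i + 1 : ℕ) : Fin (m + 1)) = τ ((i : ℕ) : Fin (m + 1)) + 1}

/-- `b m j t = t - ((m-1) - j)`. -/
def b (m j t : ℕ) : ℕ := t - ((m - 1) - j)

lemma val_cast' (m j : ℕ) (h : j ≤ m) : ((j : Fin (m+1)) : ℕ) = j := by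
  rw [Fin.val_natCast, Nat.mod_eq_of_lt (by omega)]

lemma last_eq (m : ℕ) : (Fin.last m) = ((m : ℕ) : Fin (m+1)) := by
  ext; simp [val_cast' m m le_rfl]

lemma smono_succ (m : ℕ) (f : Fin (m+1) → ℕ)
    (h : ∀ i : ℕ, i < m → f ((i : ℕ) : Fin (m+1)) < f ((i+1 : ℕ) : Fin (m+1))) :
    StrictMono f := by
  rw [Fin.strictMono_iff_lt_succ]
  intro i
  have h1 : Fin.castSucc i = ((i : ℕ) : Fin (m+1)) := by
    ext; rw [val_cast' m i (le_of_lt i.isLt)]; simp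
  have h2 : i.succ = (((i : ℕ) + 1 : ℕ) : Fin (m+1)) := by
    ext; rw [val_cast' m _ i.isLt]; simp
  rw [h1, h2]; exact h i i.isLt

lemma smono_app (m : ℕ) (f : Fin (m+1) → ℕ) (hf : StrictMono f) (i j : ℕ)
    (hij : i < j) (hj : j ≤ m) : f ((i : ℕ) : Fin (m+1)) < f ((j : ℕ) : Fin (m+1)) := by
  apply hf
  rw [Fin.lt_def, val_cast' m i (by omega), val_cast' m j hj]
  exact hij

lemma Tform (n m k t : ℕ) (hk : 1 ≤ k) (hkm : k < m) (τ : Fin (m+1) → ℕ)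
    (hτ : τ ∈ T n m k t) : ∀ j, k ≤ j → j < m →
      τ ((j : ℕ) : Fin (m+1)) = t - ((m-1) - j) := by
  obtain ⟨⟨hmono, h0, hlast⟩, ht, hcons⟩ := hτ
  have key : ∀ j, k ≤ j → j < m →
      τ ((j : ℕ) : Fin (m+1)) = τ ((k : ℕ) : Fin (m+1)) + (j - k) := by
    intro j hj hjm
    induction j with
    | zero => omega
    | succ j ih =>
      rcases eq_or_lt_of_le hj with h | h
      · rw [← h]; simp
      · have hjk : k ≤ j := by omega
        rw [hcons j hjk hjm, ih hjk (by omega)]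
        omega
  have hm1 : τ (((m-1 : ℕ) : ℕ) : Fin (m+1)) = τ ((k : ℕ) : Fin (m+1)) + ((m-1) - k) :=
    key (m-1) (by omega) (by omega)
  rw [ht] at hm1
  intro j hj hjm
  have := key j hj hjm
  omega

/-- The map shifting the coordinates at indices `k, ..., m-1` down by one is a
bijection from `{τ ∈ T k t : τ (k-1) ≠ b (k-1) t}` onto `T k (t-1)`. -/
theorem stmt8 (n m k t : ℕ) (hk : 1 ≤ k) (hkm : k < m) (hmt : m ≤ t) (htn : t < n) :
    Set.BijOn
      (fun (τ : Fin (m + 1) → ℕ) (i : Fin (m + 1)) =>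
        if k ≤ (i : ℕ) ∧ (i : ℕ) < m then τ i - 1 else τ i)
      {τ ∈ T n m k t | τ ((k - 1 : ℕ) : Fin (m + 1)) ≠ b m (k - 1) t}
      (T n m k (t - 1)) := by
  refine ⟨?_, ?_, ?_⟩
  · -- MapsTo
    rintro τ ⟨hT, hne⟩
    have hform := Tform n m k t hk hkm τ hT
    obtain ⟨⟨hmono, h0, hlast⟩, ht, hcons⟩ := hT
    have hpos : ∀ j : ℕ, 1 ≤ j → j ≤ m → 0 < τ ((j : ℕ) : Fin (m+1)) := by
      intro j h1 h2
      have := smono_app m τ hmono 0 j (by omega) h2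
      simpa [h0] using this
    refine ⟨⟨?_, ?_, ?_⟩, ?_, ?_⟩
    · -- StrictMono
      apply smono_succ
      intro i him
      dsimp only
      rw [val_cast' m i (by omega), val_cast' m (i+1) (by omega)]
      by_cases h1 : i + 1 < k
      · rw [if_neg (by omega), if_neg (by omega)]
        exact smono_app m τ hmono i (i+1) (by omega) (by omega)
      · by_cases h2 : i + 1 = k
        · rw [if_neg (by omega), if_pos (by omega)]
          have hik : i = k - 1 := by omega
          subst hik
          rw [show k - 1 + 1 = k from by omega]
          have hlt := smono_app m τ hmono (k-1) k (by omega) (by omega)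
          have hbk : τ ((k : ℕ) : Fin (m+1)) = t - ((m-1) - k) := hform k le_rfl hkm
          simp only [b] at hne
          omega
        · by_cases h3 : i + 1 < m
          · rw [if_pos (by omega), if_pos (by omega)]
            have hlt := smono_app m τ hmono i (i+1) (by omega) (by omega)
            have hp := hpos i (by omega) (by omega)
            omega
          · -- i + 1 = m
            have him' : i + 1 = m := by omega
            rw [if_pos (by omega), if_neg (by omega)]
            have h1 : τ (((i : ℕ)) : Fin (m+1)) = t := by
              rw [show i = m - 1 by omega]; exact ht
            have h2 : τ (((i+1 : ℕ)) : Fin (m+1)) = n := by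
              rw [him', ← last_eq]; exact hlast
            omega
    · -- τ' 0 = 0
      dsimp only
      rw [if_neg (by simp; omega)]
      exact h0
    · -- τ' last = n
      dsimp only
      rw [if_neg (by simp)]
      exact hlast
    · -- τ' (m-1) = t - 1
      dsimp only
      rw [val_cast' m (m-1) (by omega), if_pos (by omega), ht]
    · -- consecutive
      intro i hki him
      dsimp only
      rw [val_cast' m i (by omega), val_cast' m (i+1) (by omega),
        if_pos (by omega), if_pos (by omega), hcons i hki him]
      have hp := hpos i (by omega) (by omega)
      omega
  · -- InjOn
    rintro τ1 ⟨⟨⟨hm1, h01, hl1⟩, _, _⟩, _⟩ τ2 ⟨⟨⟨hm2, h02, hl2⟩, _, _⟩, _⟩ heq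
    funext i
    have hi := congrFun heq i
    dsimp only at hi
    by_cases hc : k ≤ (i : ℕ) ∧ (i : ℕ) < m
    · rw [if_pos hc, if_pos hc] at hi
      have hi0 : (0 : Fin (m+1)) < i := by
        rw [Fin.lt_def, Fin.val_zero]; omega
      have p1 : 0 < τ1 i := by have := hm1 hi0; omega
      have p2 : 0 < τ2 i := by have := hm2 hi0; omega
      omega
    · rwa [if_neg hc, if_neg hc] at hi
  · -- SurjOn
    rintro σ hσ
    have hform := Tform n m k (t-1) hk hkm σ hσ
    obtain ⟨⟨hmono, h0, hlast⟩, ht, hcons⟩ := hσ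
    refine ⟨fun i => if k ≤ (i : ℕ) ∧ (i : ℕ) < m then σ i + 1 else σ i,
      ⟨⟨⟨?_, ?_, ?_⟩, ?_, ?_⟩, ?_⟩, ?_⟩
    · -- StrictMono τ
      apply smono_succ
      intro i him
      rw [val_cast' m i (by omega), val_cast' m (i+1) (by omega)]
      by_cases h1 : i + 1 < k
      · rw [if_neg (by omega), if_neg (by omega)]
        exact smono_app m σ hmono i (i+1) (by omega) (by omega)
      · by_cases h2 : i + 1 = k
        · rw [if_neg (by omega), if_pos (by omega)]
          have := smono_app m σ hmono i (i+1) (by omega) (by omega)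
          omega
        · by_cases h3 : i + 1 < m
          · rw [if_pos (by omega), if_pos (by omega)]
            have := smono_app m σ hmono i (i+1) (by omega) (by omega)
            omega
          · have him' : i + 1 = m := by omega
            rw [if_pos (by omega), if_neg (by omega)]
            have hA : σ (((i : ℕ)) : Fin (m+1)) = t - 1 := by
              rw [show i = m - 1 by omega]; exact ht
            have hB : σ (((i+1 : ℕ)) : Fin (m+1)) = n := by
              rw [him', ← last_eq]; exact hlast
            omega
    · -- τ 0 = 0
      dsimp only
      rw [if_neg (by simp; omega)]
      exact h0
    · -- τ last = n
      dsimp only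
      rw [if_neg (by simp)]
      exact hlast
    · -- τ (m-1) = t
      dsimp only
      rw [val_cast' m (m-1) (by omega), if_pos (by omega), ht]
      omega
    · -- consecutive
      intro i hki him
      dsimp only
      rw [val_cast' m i (by omega), val_cast' m (i+1) (by omega),
        if_pos (by omega), if_pos (by omega), hcons i hki him]
    · -- τ (k-1) ≠ b
      dsimp only
      rw [val_cast' m (k-1) (by omega), if_neg (by omega)]
      have hlt := smono_app m σ hmono (k-1) k (by omega) (by omega)
      have hbk : σ ((k : ℕ) : Fin (m+1)) = (t-1) - ((m-1) - k) := hform k le_rfl hkm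
      simp only [b]
      omega
    · -- image equals σ
      funext i
      dsimp only
      by_cases hc : k ≤ (i : ℕ) ∧ (i : ℕ) < m
      · rw [if_pos hc, if_pos hc]; omega
      · rw [if_neg hc, if_neg hc]
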